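/- Let Φ be a Hausdorff topological space with bornology 𝔹, S(t) a semigroup with all maps S(t) continuous and possessing a 𝔹-attractor 𝓐 (obtained from a compact attracting set). Then 𝓐 is strictly invariant: S(t)𝓐 = 𝓐 for all t ≥ 0. -/
import Mathlib


open Set Filter Topology

/-- The ω-limit set of `B` under the semigroup `S`:
`ω(B) = ⋂_{T ≥ 0} closure (⋃_{t ≥ T} S(t)B)`. -/
def omegaLimitSet {Φ : Type*} [TopologicalSpace Φ] (S : ℝ → Φ → Φ) (B : Set Φ) : Set Φ :=
  ⋂ T ∈ Ici (0 : ℝ), closure (⋃ t ∈ Ici T, S t '' B)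

/-- `K` attracts `B` under the semigroup `S`: for every open neighbourhood `O` of `K`
there is `T ≥ 0` with `S(t)B ⊆ O` for all `t ≥ T`. -/
def Attracts {Φ : Type*} [TopologicalSpace Φ] (S : ℝ → Φ → Φ) (K B : Set Φ) : Prop :=
  ∀ O : Set Φ, IsOpen O → K ⊆ O → ∃ T : ℝ, 0 ≤ T ∧ ∀ t ≥ T, S t '' B ⊆ O

/-- Strict invariance of the attractor: if all maps `S(t)` are continuous and `𝓐` is the
`𝔹`-attractor obtained from a compact attracting set `𝓑` (i.e. `𝓐` is the closure of the
union of the ω-limit sets, it is compact, attracts every `B ∈ 𝔹` and is minimal), then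
`S(t)𝓐 = 𝓐` for all `t ≥ 0`. -/
theorem stmt_4 {Φ : Type*} [TopologicalSpace Φ] [T2Space Φ]
    (S : ℝ → Φ → Φ)
    (hS0 : S 0 = id)
    (hSadd : ∀ t s : ℝ, 0 ≤ t → 0 ≤ s → S (t + s) = S t ∘ S s)
    (hcont : ∀ t : ℝ, 0 ≤ t → Continuous (S t))
    (𝔹 : Set (Set Φ)) (h𝔹 : ∀ B ∈ 𝔹, B.Nonempty)
    (𝓑 : Set Φ) (h𝓑 : IsCompact 𝓑)
    (hattr : ∀ B ∈ 𝔹, Attracts S 𝓑 B)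
    (𝓐 : Set Φ)
    (h𝓐 : 𝓐 = closure (⋃ B ∈ 𝔹, omegaLimitSet S B))
    (h𝓐c : IsCompact 𝓐)
    (h𝓐attr : ∀ B ∈ 𝔹, Attracts S 𝓐 B)
    (h𝓐min : ∀ K : Set Φ, IsCompact K → (∀ B ∈ 𝔹, Attracts S K B) → 𝓐 ⊆ K) :
    ∀ t : ℝ, 0 ≤ t → S t '' 𝓐 = 𝓐 := by
  intro t ht
  apply Subset.antisymm
  · -- S t '' 𝓐 ⊆ 𝓐, via invariance of ω-limit sets
    rw [h𝓐]
    calc S t '' closure (⋃ B ∈ 𝔹, omegaLimitSet S B)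
        ⊆ closure (S t '' ⋃ B ∈ 𝔹, omegaLimitSet S B) :=
          image_closure_subset_closure_image (hcont t ht)
      _ ⊆ closure (⋃ B ∈ 𝔹, omegaLimitSet S B) := by
          apply closure_mono
          rintro _ ⟨x, hx, rfl⟩
          simp only [mem_iUnion] at hx ⊢
          obtain ⟨B, hB, hxB⟩ := hx
          refine ⟨B, hB, ?_⟩
          -- show S t x ∈ ω(B)
          simp only [omegaLimitSet, mem_iInter, mem_Ici] at hxB ⊢
          intro T hT
          have hx' : x ∈ closure (⋃ s ∈ Ici T, S s '' B) := hxB T hT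
          have h1 : S t x ∈ closure (S t '' ⋃ s ∈ Ici T, S s '' B) :=
            image_closure_subset_closure_image (hcont t ht) ⟨x, hx', rfl⟩
          refine closure_mono ?_ h1
          rintro _ ⟨y, hy, rfl⟩
          simp only [mem_iUnion, mem_Ici] at hy ⊢
          obtain ⟨s, hs, z, hz, rfl⟩ := hy
          have hs0 : 0 ≤ s := le_trans hT hs
          refine ⟨t + s, by linarith, z, hz, ?_⟩
          rw [hSadd t s ht hs0]; rfl
  · -- 𝓐 ⊆ S t '' 𝓐, via minimality
    apply h𝓐min
    · exact h𝓐c.image (hcont t ht)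
    · intro B hB O hO hSO
      have hU : IsOpen (S t ⁻¹' O) := hO.preimage (hcont t ht)
      have h𝓐U : 𝓐 ⊆ S t ⁻¹' O := fun x hx => hSO ⟨x, hx, rfl⟩
      obtain ⟨T, hT0, hT⟩ := h𝓐attr B hB (S t ⁻¹' O) hU h𝓐U
      refine ⟨T + t, by linarith, fun s hs => ?_⟩
      have hst : s - t ≥ T := by linarith
      have hst0 : 0 ≤ s - t := by linarith
      have : S s = S t ∘ S (s - t) := by
        have := hSadd t (s - t) ht hst0
        rwa [add_sub_cancel] at this
      rw [this, image_comp]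
      rintro _ ⟨y, hy, rfl⟩
      exact hT (s - t) hst hy
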